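/- Suppose that zer A ≠ ∅ and that the sequence (x_k)_{k∈ℕ} is bounded; that either ∑_k |α_{k+1} − α_k| < ∞, or for every k, |γ_k| ≠ 1 and |α_{k+1} − α_k|/(1 − |γ_{k+1}|) → 0; that for every k, |γ_k| ∈ [0,1], with α_k + γ_k → 1, ∑_k (1 − |γ_k|) = ∞, and ∑_k |(α_{k+1} + γ_{k+1}) − (α_k + γ_k)| < ∞; that α_k → 0, ∑_k |β_k| < ∞, and ∑_k ‖δ_k e_k‖ < ∞; and that inf_{k∈ℕ} c_k > 0 and ∑_k |c_{k+1} − c_k| < ∞. Then x_k − J_{c_k}(x_k) → 0 strongly, Ω is nonempty, and Ω ⊆ zer A. -/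

import Mathlib

open Filter InnerProductSpace

/-- `z` is a weak sequential cluster point of the sequence `y`: some subsequence of `y`
converges weakly to `z`. -/
def WSeqClusterPt {H : Type*} [NormedAddCommGroup H] [InnerProductSpace ℝ H]
    (y : ℕ → H) (z : H) : Prop :=
  ∃ φ : ℕ → ℕ, StrictMono φ ∧
    ∀ w : H, Tendsto (fun k => ⟪y (φ k), w⟫_ℝ) atTop (nhds ⟪z, w⟫_ℝ)


section aux

lemma xuLemma (a q t σ : ℕ → ℝ) (B : ℝ)
    (ha0 : ∀ k, 0 ≤ a k) (haB : ∀ k, a k ≤ B)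
    (hq0 : ∀ k, 0 ≤ q k) (hq1 : ∀ k, q k ≤ 1)
    (hσ0 : ∀ k, 0 ≤ σ k)
    (hrec : ∀ k, a (k + 1) ≤ q k * a k + (1 - q k) * t k + σ k)
    (hqdiv : Tendsto (fun n => ∑ k ∈ Finset.range n, (1 - q k)) atTop atTop)
    (ht : Tendsto t atTop (nhds 0))
    (hσ : Summable σ) :
    Tendsto a atTop (nhds 0) := by
  have hB0 : 0 ≤ B := le_trans (ha0 0) (haB 0)
  rw [Metric.tendsto_atTop]
  intro ε hε
  have hε4 : 0 < ε / 4 := by linarith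
  -- N1 : t k ≤ ε/4 eventually
  obtain ⟨N₁, hN₁⟩ := (Metric.tendsto_atTop.1 ht) (ε / 4) hε4
  have htb : ∀ k ≥ N₁, t k ≤ ε / 4 := by
    intro k hk
    have := hN₁ k hk
    rw [Real.dist_eq, sub_zero] at this
    exact le_of_lt (lt_of_abs_lt this)
  -- N2 : tail sums of σ ≤ ε/4
  obtain ⟨N₂, hN₂⟩ := (Metric.tendsto_atTop.1 (tendsto_sum_nat_add σ)) (ε / 4) hε4
  set N := max N₁ N₂ with hN
  have htail : ∀ n, ∑ j ∈ Finset.Ico N n, σ j ≤ ε / 4 := by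
    intro n
    rcases le_or_gt N n with h | h
    · have h1 : ∑ j ∈ Finset.Ico N n, σ j = ∑ j ∈ Finset.range (n - N), σ (j + N) := by
        rw [Finset.sum_Ico_eq_sum_range]
        apply Finset.sum_congr rfl; intro i _; ring_nf
      rw [h1]
      have h2 : ∑ j ∈ Finset.range (n - N), σ (j + N) ≤ ∑' j, σ (j + N) := by
        exact Summable.sum_le_tsum _ (fun i _ => hσ0 _) ((summable_nat_add_iff N).2 hσ)
      refine le_trans h2 ?_
      have := hN₂ N (le_max_right _ _)
      rw [Real.dist_eq, sub_zero] at this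
      exact le_of_lt (lt_of_abs_lt this)
    · rw [Finset.Ico_eq_empty (by omega)]
      simp; linarith
  -- induction claim
  have claim : ∀ n ≥ N, a n ≤ B * ∏ j ∈ Finset.Ico N n, q j + ε / 4 + ∑ j ∈ Finset.Ico N n, σ j := by
    intro n hn
    induction n with
    | zero =>
      simp only [Nat.le_zero] at hn
      rw [hn]; simp; linarith [haB 0]
    | succ m ih =>
      rcases Nat.lt_or_ge m N with h | h
      · -- m + 1 = N
        have : N = m + 1 := by omega
        rw [← this]; simp; linarith [haB N]
      · have ihm := ih h
        have key := hrec m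
        have hqa : q m * a m ≤ q m * (B * ∏ j ∈ Finset.Ico N m, q j + ε / 4 + ∑ j ∈ Finset.Ico N m, σ j) :=
          mul_le_mul_of_nonneg_left ihm (hq0 m)
        have hprod : ∏ j ∈ Finset.Ico N (m+1), q j = (∏ j ∈ Finset.Ico N m, q j) * q m := by
          rw [Finset.prod_Ico_succ_top h]
        have hsum : ∑ j ∈ Finset.Ico N (m+1), σ j = (∑ j ∈ Finset.Ico N m, σ j) + σ m := by
          rw [Finset.sum_Ico_succ_top h]
        have htm : (1 - q m) * t m ≤ (1 - q m) * (ε / 4) :=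
          mul_le_mul_of_nonneg_left (htb m (le_trans (le_max_left _ _) h)) (by linarith [hq1 m])
        have hS0 : 0 ≤ ∑ j ∈ Finset.Ico N m, σ j := Finset.sum_nonneg (fun i _ => hσ0 i)
        have hqS : q m * (∑ j ∈ Finset.Ico N m, σ j) ≤ ∑ j ∈ Finset.Ico N m, σ j := by
          nlinarith [hq0 m, hq1 m]
        calc a (m+1) ≤ q m * a m + (1 - q m) * t m + σ m := key
          _ ≤ q m * (B * ∏ j ∈ Finset.Ico N m, q j + ε / 4 + ∑ j ∈ Finset.Ico N m, σ j)
              + (1 - q m) * (ε / 4) + σ m := by linarith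
          _ = B * ((∏ j ∈ Finset.Ico N m, q j) * q m) + ε / 4 + (q m * ∑ j ∈ Finset.Ico N m, σ j + σ m) := by ring
          _ ≤ B * ∏ j ∈ Finset.Ico N (m+1), q j + ε / 4 + ∑ j ∈ Finset.Ico N (m+1), σ j := by
              rw [hprod, hsum]; linarith
  -- products tend to 0
  have hP : Tendsto (fun n => ∏ j ∈ Finset.Ico N n, q j) atTop (nhds 0) := by
    have hle : ∀ n ≥ N, ∏ j ∈ Finset.Ico N n, q j ≤ Real.exp (-(∑ j ∈ Finset.Ico N n, (1 - q j))) := by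
      intro n _
      have h1 : ∀ j ∈ Finset.Ico N n, q j ≤ Real.exp (-(1 - q j)) := by
        intro j _
        have := Real.add_one_le_exp (q j - 1)
        have h2 : -(1 - q j) = q j - 1 := by ring
        rw [h2]; linarith
      calc ∏ j ∈ Finset.Ico N n, q j ≤ ∏ j ∈ Finset.Ico N n, Real.exp (-(1 - q j)) :=
            Finset.prod_le_prod (fun j _ => hq0 j) h1
        _ = Real.exp (∑ j ∈ Finset.Ico N n, -(1 - q j)) := (Real.exp_sum _ _).symm
        _ = Real.exp (-(∑ j ∈ Finset.Ico N n, (1 - q j))) := by rw [Finset.sum_neg_distrib]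
    have hsumIco : Tendsto (fun n => ∑ j ∈ Finset.Ico N n, (1 - q j)) atTop atTop := by
      have : ∀ n ≥ N, ∑ j ∈ Finset.Ico N n, (1 - q j)
          = ∑ j ∈ Finset.range n, (1 - q j) - ∑ j ∈ Finset.range N, (1 - q j) := by
        intro n hn
        rw [Finset.sum_Ico_eq_sub _ hn]
      have hEE : (fun n => ∑ j ∈ Finset.range n, (1 - q j) + -∑ j ∈ Finset.range N, (1 - q j))
          =ᶠ[atTop] (fun n => ∑ j ∈ Finset.Ico N n, (1 - q j)) := by
        filter_upwards [Filter.eventually_ge_atTop N] with n hn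
        rw [this n hn]; ring
      exact Tendsto.congr' hEE (tendsto_atTop_add_const_right atTop _ hqdiv)
    have hexp : Tendsto (fun n => Real.exp (-(∑ j ∈ Finset.Ico N n, (1 - q j)))) atTop (nhds 0) :=
      Real.tendsto_exp_atBot.comp (tendsto_neg_atBot_iff.2 hsumIco)
    apply squeeze_zero' (Filter.eventually_atTop.2 ⟨N, fun n _ => Finset.prod_nonneg (fun j _ => hq0 j)⟩)
      (Filter.eventually_atTop.2 ⟨N, hle⟩) hexp
  -- conclude
  obtain ⟨N₃, hN₃⟩ := (Metric.tendsto_atTop.1 (hP.const_mul B)) (ε / 4) hε4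
  refine ⟨max N N₃, fun n hn => ?_⟩
  have h1 := claim n (le_trans (le_max_left _ _) hn)
  have h2 := hN₃ n (le_trans (le_max_right _ _) hn)
  rw [Real.dist_eq, mul_zero, sub_zero] at h2
  rw [Real.dist_eq, sub_zero]
  have h3 : B * ∏ j ∈ Finset.Ico N n, q j < ε / 4 := lt_of_abs_lt h2
  have h4 := htail n
  have := ha0 n
  rw [abs_of_nonneg this]
  linarith


section
variable {H : Type*} [NormedAddCommGroup H] [InnerProductSpace ℝ H]

lemma res_nonexp (A : H → Set H)
    (hmono : ∀ x y xu yv : H, xu ∈ A x → yv ∈ A y → 0 ≤ ⟪x - y, xu - yv⟫_ℝ)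
    (J : ℝ → H → H) (hJ : ∀ c : ℝ, 0 < c → ∀ x : H, (1 / c) • (x - J c x) ∈ A (J c x))
    {c : ℝ} (hc : 0 < c) (x y : H) : ‖J c x - J c y‖ ≤ ‖x - y‖ := by
  set a := J c x; set b := J c y
  have h := hmono a b _ _ (hJ c hc x) (hJ c hc y)
  have hc' : 0 < 1 / c := by positivity
  rw [← smul_sub, real_inner_smul_right] at h
  have h2 : 0 ≤ ⟪a - b, x - a - (y - b)⟫_ℝ := nonneg_of_mul_nonneg_right h hc'
  have h3 : x - a - (y - b) = (x - y) - (a - b) := by abel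
  rw [h3, inner_sub_right] at h2
  have h4 := real_inner_le_norm (a - b) (x - y)
  have h5 : ⟪a - b, a - b⟫_ℝ = ‖a - b‖ * ‖a - b‖ := real_inner_self_eq_norm_mul_norm _
  nlinarith [norm_nonneg (a - b), norm_nonneg (x - y)]

lemma res_fix (A : H → Set H)
    (hmono : ∀ x y xu yv : H, xu ∈ A x → yv ∈ A y → 0 ≤ ⟪x - y, xu - yv⟫_ℝ)
    (J : ℝ → H → H) (hJ : ∀ c : ℝ, 0 < c → ∀ x : H, (1 / c) • (x - J c x) ∈ A (J c x))
    {c : ℝ} (hc : 0 < c) {p : H} (hp : (0 : H) ∈ A p) : J c p = p := by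
  have h := hmono (J c p) p _ _ (hJ c hc p) hp
  rw [sub_zero, real_inner_smul_right] at h
  have hc' : 0 < 1 / c := by positivity
  have h2 : 0 ≤ ⟪J c p - p, p - J c p⟫_ℝ := nonneg_of_mul_nonneg_right h hc'
  have h3 : ⟪J c p - p, p - J c p⟫_ℝ = -⟪J c p - p, J c p - p⟫_ℝ := by
    rw [← inner_neg_right]; congr 1; abel
  rw [h3] at h2
  have h4 : ⟪J c p - p, J c p - p⟫_ℝ = ‖J c p - p‖ * ‖J c p - p‖ := real_inner_self_eq_norm_mul_norm _
  have h5 : ‖J c p - p‖ = 0 := by nlinarith [norm_nonneg (J c p - p)]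
  rw [norm_sub_eq_zero_iff] at h5
  exact h5

lemma res_cmp (A : H → Set H)
    (hmono : ∀ x y xu yv : H, xu ∈ A x → yv ∈ A y → 0 ≤ ⟪x - y, xu - yv⟫_ℝ)
    (J : ℝ → H → H) (hJ : ∀ c : ℝ, 0 < c → ∀ x : H, (1 / c) • (x - J c x) ∈ A (J c x))
    {lam mu : ℝ} (hl : 0 < lam) (hm : 0 < mu) (x : H) :
    ‖J mu x - J lam x‖ ≤ (|mu - lam| / lam) * ‖x - J lam x‖ := by
  set a := J lam x; set b := J mu x
  rw [norm_sub_rev]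
  have h := hmono a b _ _ (hJ lam hl x) (hJ mu hm x)
  rw [inner_sub_right, real_inner_smul_right, real_inner_smul_right] at h
  -- 0 ≤ (1/lam) ⟪a-b, x-a⟫ - (1/mu) ⟪a-b, x-b⟫
  have key : lam * ⟪a - b, x - b⟫_ℝ ≤ mu * ⟪a - b, x - a⟫_ℝ := by
    have hlm : 0 < lam * mu := by positivity
    have := mul_le_mul_of_nonneg_left h (le_of_lt hlm)
    field_simp at this ⊢
    nlinarith [this]
  have hsplit : ⟪a - b, x - b⟫_ℝ = ⟪a - b, x - a⟫_ℝ + ⟪a - b, a - b⟫_ℝ := by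
    rw [← inner_add_right]; congr 1; abel
  rw [hsplit] at key
  have h4 : ⟪a - b, a - b⟫_ℝ = ‖a - b‖ * ‖a - b‖ := real_inner_self_eq_norm_mul_norm _
  have h5 : (mu - lam) * ⟪a - b, x - a⟫_ℝ ≤ |mu - lam| * (‖a - b‖ * ‖x - a‖) := by
    calc (mu - lam) * ⟪a - b, x - a⟫_ℝ ≤ |(mu - lam) * ⟪a - b, x - a⟫_ℝ| := le_abs_self _
      _ = |mu - lam| * |⟪a - b, x - a⟫_ℝ| := abs_mul _ _
      _ ≤ |mu - lam| * (‖a - b‖ * ‖x - a‖) :=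
          mul_le_mul_of_nonneg_left (abs_real_inner_le_norm _ _) (abs_nonneg _)
  have h6 : lam * (‖a - b‖ * ‖a - b‖) ≤ |mu - lam| * (‖a - b‖ * ‖x - a‖) := by nlinarith [key]
  rcases eq_or_lt_of_le (norm_nonneg (a - b)) with h7 | h7
  · rw [← h7]; positivity
  · rw [div_mul_eq_mul_div, le_div_iff₀ hl]
    nlinarith [h6]
end

lemma exists_wcp {H : Type*} [NormedAddCommGroup H] [InnerProductSpace ℝ H] [CompleteSpace H]
    (x : ℕ → H) (M : ℝ) (hM : ∀ k, ‖x k‖ ≤ M) : ∃ z, WSeqClusterPt x z := by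
  have M0 : 0 ≤ M := le_trans (norm_nonneg _) (hM 0)
  -- diagonal extraction via sequential compactness of the Hilbert cube
  have hg : ∀ k, (fun i => ⟪x k, x i⟫_ℝ) ∈ Set.univ.pi (fun _ : ℕ => Set.Icc (-(M*M)) (M*M)) := by
    intro k i _
    have h1 : |⟪x k, x i⟫_ℝ| ≤ M * M := by
      refine le_trans (abs_real_inner_le_norm _ _) ?_
      exact mul_le_mul (hM k) (hM i) (norm_nonneg _) M0
    exact abs_le.1 h1
  have hcomp : IsCompact (Set.univ.pi fun _ : ℕ => Set.Icc (-(M*M)) (M*M)) :=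
    isCompact_univ_pi fun _ => isCompact_Icc
  obtain ⟨L, _, φ, hφ, hconv⟩ := hcomp.isSeqCompact hg
  have hcoord : ∀ i, Tendsto (fun k => ⟪x (φ k), x i⟫_ℝ) atTop (nhds (L i)) := by
    intro i
    exact (tendsto_pi_nhds.1 hconv) i
  set K := (Submodule.span ℝ (Set.range x)).topologicalClosure with hKdef
  have hxK : ∀ k, x k ∈ K := fun k =>
    Submodule.le_topologicalClosure _ (Submodule.subset_span ⟨k, rfl⟩)
  -- convergence on the span
  have hspan : ∀ w ∈ Submodule.span ℝ (Set.range x),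
      ∃ l, Tendsto (fun k => ⟪x (φ k), w⟫_ℝ) atTop (nhds l) := by
    intro w hw
    induction hw using Submodule.span_induction with
    | mem w hw =>
      obtain ⟨i, rfl⟩ := hw
      exact ⟨L i, hcoord i⟩
    | zero => exact ⟨0, by simpa using (tendsto_const_nhds : Tendsto (fun _ : ℕ => (0:ℝ)) atTop _)⟩
    | add a b _ _ ha hb =>
      obtain ⟨la, ha⟩ := ha; obtain ⟨lb, hb⟩ := hb
      exact ⟨la + lb, by simpa [inner_add_right] using ha.add hb⟩
    | smul r a _ ha =>
      obtain ⟨la, ha⟩ := ha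
      exact ⟨r * la, by simpa [real_inner_smul_right] using ha.const_mul r⟩
  -- Cauchy on the closure
  have hK : ∀ w ∈ K, CauchySeq (fun k => ⟪x (φ k), w⟫_ℝ) := by
    intro w hw
    rw [Metric.cauchySeq_iff]
    intro ε hε
    have hM1 : 0 < 4 * (M + 1) := by linarith
    have hwc : w ∈ closure ((Submodule.span ℝ (Set.range x) : Submodule ℝ H) : Set H) := by
      rw [hKdef] at hw
      exact hw
    obtain ⟨w', hw's, hw'd⟩ := Metric.mem_closure_iff.1 hwc (ε / (4 * (M + 1))) (by positivity)
    obtain ⟨l, hl⟩ := hspan w' hw's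
    obtain ⟨N, hN⟩ := Metric.cauchySeq_iff.1 hl.cauchySeq (ε / 2) (by linarith)
    refine ⟨N, fun m hm n hn => ?_⟩
    have key : ∀ j, |⟪x (φ j), w⟫_ℝ - ⟪x (φ j), w'⟫_ℝ| ≤ M * (ε / (4 * (M + 1))) := by
      intro j
      have h1 : ⟪x (φ j), w⟫_ℝ - ⟪x (φ j), w'⟫_ℝ = ⟪x (φ j), w - w'⟫_ℝ := (inner_sub_right _ _ _).symm
      rw [h1]
      refine le_trans (abs_real_inner_le_norm _ _) ?_
      refine mul_le_mul (hM _) (le_of_lt ?_) (norm_nonneg _) M0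
      rw [← dist_eq_norm]; exact hw'd
    have hMε : M * (ε / (4 * (M + 1))) ≤ ε / 4 := by
      rw [mul_div_assoc', div_le_div_iff₀ hM1 (by norm_num : (0:ℝ) < 4)]
      nlinarith
    have h2 := hN m hm n hn
    rw [Real.dist_eq] at h2 ⊢
    have k1 := key m; have k2 := key n
    have : ⟪x (φ m), w⟫_ℝ - ⟪x (φ n), w⟫_ℝ =
        (⟪x (φ m), w⟫_ℝ - ⟪x (φ m), w'⟫_ℝ) + (⟪x (φ m), w'⟫_ℝ - ⟪x (φ n), w'⟫_ℝ)
          + (⟪x (φ n), w'⟫_ℝ - ⟪x (φ n), w⟫_ℝ) := by ring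
    rw [this]
    calc |_ + _ + _| ≤ |⟪x (φ m), w⟫_ℝ - ⟪x (φ m), w'⟫_ℝ| + |⟪x (φ m), w'⟫_ℝ - ⟪x (φ n), w'⟫_ℝ|
          + |⟪x (φ n), w'⟫_ℝ - ⟪x (φ n), w⟫_ℝ| := abs_add_three _ _ _
      _ < ε := by
          rw [abs_sub_comm (⟪x (φ n), w'⟫_ℝ)] at *
          linarith
  -- convergence for every w
  have hall : ∀ w : H, ∃ l, Tendsto (fun k => ⟪x (φ k), w⟫_ℝ) atTop (nhds l) := by
    intro w
    haveI : K.HasOrthogonalProjection := by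
      haveI : CompleteSpace K := (Submodule.isClosed_topologicalClosure _).completeSpace_coe
      infer_instance
    have horth : w - (K.orthogonalProjectionOnto w : H) ∈ Kᗮ :=
      Submodule.sub_starProjection_mem_orthogonal (K := K) w
    have hdec : ∀ k, ⟪x (φ k), w⟫_ℝ = ⟪x (φ k), ((K.orthogonalProjectionOnto w : H))⟫_ℝ := by
      intro k
      have h0 : ⟪x (φ k), w - (K.orthogonalProjectionOnto w : H)⟫_ℝ = 0 :=
        (Submodule.mem_orthogonal K _).1 horth _ (hxK _)
      have := inner_sub_right (𝕜 := ℝ) (x (φ k)) w ((K.orthogonalProjectionOnto w : H))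
      rw [h0] at *
      linarith [inner_sub_right (𝕜 := ℝ) (x (φ k)) w ((K.orthogonalProjectionOnto w : H)), h0]
    obtain ⟨l, hl⟩ := cauchySeq_tendsto_of_complete (hK _ (SetLike.coe_mem (K.orthogonalProjectionOnto w)))
    exact ⟨l, by simp only [hdec]; exact hl⟩
  choose ψ hψ using hall
  have hbound : ∀ w, |ψ w| ≤ M * ‖w‖ := by
    intro w
    have h1 : Tendsto (fun k => |⟪x (φ k), w⟫_ℝ|) atTop (nhds |ψ w|) := (hψ w).abs
    refine le_of_tendsto h1 (Filter.Eventually.of_forall fun k => ?_)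
    exact le_trans (abs_real_inner_le_norm _ _) (mul_le_mul_of_nonneg_right (hM _) (norm_nonneg _))
  let F : H →ₗ[ℝ] ℝ :=
    { toFun := ψ
      map_add' := fun a b => tendsto_nhds_unique (hψ (a + b))
        (by simpa [inner_add_right] using (hψ a).add (hψ b))
      map_smul' := fun r a => tendsto_nhds_unique (hψ (r • a))
        (by simpa [real_inner_smul_right] using (hψ a).const_mul r) }
  let Fc : H →L[ℝ] ℝ := F.mkContinuous M (fun w => by
    simpa [Real.norm_eq_abs, F] using hbound w)
  refine ⟨(InnerProductSpace.toDual ℝ H).symm Fc, φ, hφ, fun w => ?_⟩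
  have hz : ⟪((InnerProductSpace.toDual ℝ H).symm Fc : H), w⟫_ℝ = Fc w :=
    InnerProductSpace.toDual_symm_apply
  rw [hz]
  exact hψ w

end aux

/-- Proposition 3.10: under the stated parameter conditions, `x_k - J_{c_k}(x_k) → 0` and
the set of weak sequential cluster points of `(x_k)` is nonempty and contained in
`zer A`. -/
theorem stmt14 {H : Type*} [NormedAddCommGroup H] [InnerProductSpace ℝ H] [CompleteSpace H]
    (A : H → Set H)
    (hmono : ∀ x y xu yv : H, xu ∈ A x → yv ∈ A y → 0 ≤ ⟪x - y, xu - yv⟫_ℝ)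
    (hmax : ∀ x xu : H, (∀ y yv : H, yv ∈ A y → 0 ≤ ⟪x - y, xu - yv⟫_ℝ) → xu ∈ A x)
    (J : ℝ → H → H)
    (hJ : ∀ c : ℝ, 0 < c → ∀ x : H, (1 / c) • (x - J c x) ∈ A (J c x))
    (u : H) (e : ℕ → H) (c α β γ δ : ℕ → ℝ) (hc : ∀ k, 0 < c k)
    (x : ℕ → H)
    (hrec : ∀ k, x (k + 1) = α k • u + β k • x k + γ k • J (c k) (x k) + δ k • e k)
    (hzer : ∃ p : H, (0 : H) ∈ A p)
    (hxbdd : Bornology.IsBounded (Set.range x))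
    (hαdiff : Summable (fun k => |α (k + 1) - α k|) ∨
      ((∀ k, |γ k| ≠ 1) ∧
        Tendsto (fun k => |α (k + 1) - α k| / (1 - |γ (k + 1)|)) atTop (nhds 0)))
    (hγ1 : ∀ k, |γ k| ≤ 1)
    (hαγ1 : Tendsto (fun k => α k + γ k) atTop (nhds 1))
    (hγdiv : Tendsto (fun n => ∑ k ∈ Finset.range n, (1 - |γ k|)) atTop atTop)
    (hαγdiff : Summable (fun k => |(α (k + 1) + γ (k + 1)) - (α k + γ k)|))
    (hα0 : Tendsto α atTop (nhds 0))
    (hβsum : Summable (fun k => |β k|))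
    (hdesum : Summable (fun k => ‖δ k • e k‖))
    (hcinf : ∃ ε > (0 : ℝ), ∀ k, ε ≤ c k)
    (hcsum : Summable (fun k => |c (k + 1) - c k|)) :
    Tendsto (fun k => x k - J (c k) (x k)) atTop (nhds (0 : H)) ∧
      (∃ z : H, WSeqClusterPt x z) ∧
      ∀ z : H, WSeqClusterPt x z → (0 : H) ∈ A z := by
  obtain ⟨p, hp⟩ := hzer
  obtain ⟨ε, hε, hεc⟩ := hcinf
  -- bound on x
  obtain ⟨R, hR⟩ := (Metric.isBounded_iff_subset_closedBall (0 : H)).1 hxbdd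
  have hM : ∀ k, ‖x k‖ ≤ R := by
    intro k
    have := hR ⟨k, rfl⟩
    rwa [Metric.mem_closedBall, dist_zero_right] at this
  set M := R with hMdef
  have hM0 : 0 ≤ M := le_trans (norm_nonneg _) (hM 0)
  -- bound on resolvent values
  set M₂ := M + 2 * ‖p‖ with hM₂def
  have hM₂ : ∀ (cc : ℝ), 0 < cc → ∀ k, ‖J cc (x k)‖ ≤ M₂ := by
    intro cc hcc k
    have h1 : ‖J cc (x k) - p‖ ≤ ‖x k - p‖ := by
      have := res_nonexp A hmono J hJ hcc (x k) p
      rwa [res_fix A hmono J hJ hcc hp] at this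
    have h2 : ‖x k - p‖ ≤ M + ‖p‖ := le_trans (norm_sub_le _ _) (by linarith [hM k])
    calc ‖J cc (x k)‖ ≤ ‖J cc (x k) - p‖ + ‖p‖ := by
          simpa using norm_add_le (J cc (x k) - p) p
      _ ≤ M + 2 * ‖p‖ := by linarith
  have hM₂0 : 0 ≤ M₂ := le_trans (norm_nonneg _) (hM₂ (c 0) (hc 0) 0)
  -- Step 1 : ‖x (k+1) - x k‖ → 0
  set a : ℕ → ℝ := fun k => ‖x (k + 1) - x k‖ with hadef
  set q : ℕ → ℝ := fun k => |γ (k + 1)| with hqdef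
  set r : ℕ → ℝ := fun k => |α (k + 1) - α k| * (‖u‖ + M₂) with hrdef
  set σ : ℕ → ℝ := fun k => (|β (k + 1)| + |β k|) * M + (|c (k + 1) - c k| / ε) * (M + M₂)
      + |(α (k + 1) + γ (k + 1)) - (α k + γ k)| * M₂
      + (‖δ (k + 1) • e (k + 1)‖ + ‖δ k • e k‖) with hσdef
  have hkey : ∀ k, a (k + 1) ≤ q k * a k + (r k + σ k) := by
    intro k
    have hdecomp : x (k + 2) - x (k + 1) =
        (α (k + 1) - α k) • u + (β (k + 1) • x (k + 1) - β k • x k)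
        + γ (k + 1) • (J (c (k + 1)) (x (k + 1)) - J (c (k + 1)) (x k))
        + γ (k + 1) • (J (c (k + 1)) (x k) - J (c k) (x k))
        + (γ (k + 1) - γ k) • J (c k) (x k)
        + (δ (k + 1) • e (k + 1) - δ k • e k) := by
      rw [hrec (k + 1), hrec k]
      module
    have hT1 : ‖(α (k + 1) - α k) • u‖ = |α (k + 1) - α k| * ‖u‖ := by
      rw [norm_smul, Real.norm_eq_abs]
    have hT2 : ‖β (k + 1) • x (k + 1) - β k • x k‖ ≤ (|β (k + 1)| + |β k|) * M := by
      refine le_trans (norm_sub_le _ _) ?_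
      rw [norm_smul, norm_smul, Real.norm_eq_abs, Real.norm_eq_abs, add_mul]
      exact add_le_add (mul_le_mul_of_nonneg_left (hM (k + 1)) (abs_nonneg _))
        (mul_le_mul_of_nonneg_left (hM k) (abs_nonneg _))
    have hT3 : ‖γ (k + 1) • (J (c (k + 1)) (x (k + 1)) - J (c (k + 1)) (x k))‖ ≤ q k * a k := by
      rw [norm_smul, Real.norm_eq_abs]
      exact mul_le_mul_of_nonneg_left (res_nonexp A hmono J hJ (hc (k+1)) _ _) (abs_nonneg _)
    have hT4 : ‖γ (k + 1) • (J (c (k + 1)) (x k) - J (c k) (x k))‖ ≤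
        (|c (k + 1) - c k| / ε) * (M + M₂) := by
      rw [norm_smul, Real.norm_eq_abs]
      have h1 : ‖J (c k) (x k) - J (c (k + 1)) (x k)‖ ≤
          (|c k - c (k + 1)| / c (k + 1)) * ‖x k - J (c (k + 1)) (x k)‖ :=
        res_cmp A hmono J hJ (hc (k + 1)) (hc k) (x k)
      have h2 : ‖x k - J (c (k + 1)) (x k)‖ ≤ M + M₂ :=
        le_trans (norm_sub_le _ _) (add_le_add (hM k) (hM₂ _ (hc (k+1)) k))
      have h3 : |c k - c (k + 1)| / c (k + 1) ≤ |c (k + 1) - c k| / ε := by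
        rw [abs_sub_comm]
        exact div_le_div_of_nonneg_left (abs_nonneg _) hε (hεc (k + 1))
      have h4 : ‖J (c (k + 1)) (x k) - J (c k) (x k)‖ ≤ (|c (k + 1) - c k| / ε) * (M + M₂) := by
        rw [norm_sub_rev]
        calc ‖J (c k) (x k) - J (c (k + 1)) (x k)‖
            ≤ (|c k - c (k + 1)| / c (k + 1)) * ‖x k - J (c (k + 1)) (x k)‖ := h1
          _ ≤ (|c (k + 1) - c k| / ε) * (M + M₂) := by
              apply mul_le_mul h3 h2 (norm_nonneg _)
              positivity
      calc |γ (k + 1)| * ‖J (c (k + 1)) (x k) - J (c k) (x k)‖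
          ≤ 1 * ((|c (k + 1) - c k| / ε) * (M + M₂)) := by
            apply mul_le_mul (hγ1 (k+1)) h4 (norm_nonneg _) zero_le_one
        _ = (|c (k + 1) - c k| / ε) * (M + M₂) := one_mul _
    have hT5 : ‖(γ (k + 1) - γ k) • J (c k) (x k)‖ ≤
        (|(α (k + 1) + γ (k + 1)) - (α k + γ k)| + |α (k + 1) - α k|) * M₂ := by
      rw [norm_smul, Real.norm_eq_abs]
      have h1 : |γ (k + 1) - γ k| ≤ |(α (k + 1) + γ (k + 1)) - (α k + γ k)| + |α (k + 1) - α k| := by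
        have : γ (k + 1) - γ k = ((α (k + 1) + γ (k + 1)) - (α k + γ k)) - (α (k + 1) - α k) := by ring
        rw [this]
        exact abs_sub _ _
      exact mul_le_mul h1 (hM₂ _ (hc k) k) (norm_nonneg _) (by positivity)
    have hT6 : ‖δ (k + 1) • e (k + 1) - δ k • e k‖ ≤ ‖δ (k + 1) • e (k + 1)‖ + ‖δ k • e k‖ :=
      norm_sub_le _ _
    have hnorm : a (k + 1) ≤ |α (k + 1) - α k| * ‖u‖ + (|β (k + 1)| + |β k|) * M + q k * a k
        + (|c (k + 1) - c k| / ε) * (M + M₂)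
        + (|(α (k + 1) + γ (k + 1)) - (α k + γ k)| + |α (k + 1) - α k|) * M₂
        + (‖δ (k + 1) • e (k + 1)‖ + ‖δ k • e k‖) := by
      have : a (k + 1) = ‖x (k + 2) - x (k + 1)‖ := rfl
      rw [this, hdecomp]
      calc ‖_ + _ + _ + _ + _ + _‖
          ≤ ‖(α (k + 1) - α k) • u‖ + ‖β (k + 1) • x (k + 1) - β k • x k‖
            + ‖γ (k + 1) • (J (c (k + 1)) (x (k + 1)) - J (c (k + 1)) (x k))‖
            + ‖γ (k + 1) • (J (c (k + 1)) (x k) - J (c k) (x k))‖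
            + ‖(γ (k + 1) - γ k) • J (c k) (x k)‖
            + ‖δ (k + 1) • e (k + 1) - δ k • e k‖ := by
              refine le_trans (norm_add_le _ _) ?_
              gcongr
              refine le_trans (norm_add_le _ _) ?_
              gcongr
              refine le_trans (norm_add_le _ _) ?_
              gcongr
              refine le_trans (norm_add_le _ _) ?_
              gcongr
              exact norm_add_le _ _
        _ ≤ _ :=
              add_le_add (add_le_add (add_le_add (add_le_add (add_le_add
                (le_of_eq hT1) hT2) hT3) hT4) hT5) hT6
    have heq : q k * a k + (r k + σ k) = |α (k + 1) - α k| * ‖u‖ + (|β (k + 1)| + |β k|) * M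
        + q k * a k + (|c (k + 1) - c k| / ε) * (M + M₂)
        + (|(α (k + 1) + γ (k + 1)) - (α k + γ k)| + |α (k + 1) - α k|) * M₂
        + (‖δ (k + 1) • e (k + 1)‖ + ‖δ k • e k‖) := by
      simp only [hrdef, hσdef]; ring
    exact heq ▸ hnorm
  have ha0 : ∀ k, 0 ≤ a k := fun k => norm_nonneg _
  have haB : ∀ k, a k ≤ 2 * M := by
    intro k
    calc a k ≤ ‖x (k + 1)‖ + ‖x k‖ := norm_sub_le _ _
      _ ≤ 2 * M := by linarith [hM (k + 1), hM k]
  have hq0 : ∀ k, 0 ≤ q k := fun k => abs_nonneg _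
  have hq1 : ∀ k, q k ≤ 1 := fun k => hγ1 (k + 1)
  have hσ0 : ∀ k, 0 ≤ σ k := by
    intro k
    refine add_nonneg (add_nonneg (add_nonneg ?_ ?_) ?_) ?_
    · exact mul_nonneg (by positivity) hM0
    · exact mul_nonneg (div_nonneg (abs_nonneg _) hε.le) (add_nonneg hM0 hM₂0)
    · exact mul_nonneg (abs_nonneg _) hM₂0
    · exact add_nonneg (norm_nonneg _) (norm_nonneg _)
  have hσsum : Summable σ := by
    apply Summable.add
    apply Summable.add
    apply Summable.add
    · exact (((summable_nat_add_iff 1).2 hβsum).add hβsum).mul_right M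
    · exact (hcsum.div_const ε).mul_right (M + M₂)
    · exact hαγdiff.mul_right M₂
    · exact ((summable_nat_add_iff 1).2 hdesum).add hdesum
  have hqdiv' : Tendsto (fun n => ∑ k ∈ Finset.range n, (1 - q k)) atTop atTop := by
    have hshift : ∀ n, ∑ k ∈ Finset.range n, (1 - q k)
        = ∑ k ∈ Finset.range (n + 1), (1 - |γ k|) + -(1 - |γ 0|) := by
      intro n
      rw [Finset.sum_range_succ' (fun k => 1 - |γ k|) n]
      simp [hqdef]
      ring
    simp only [hshift]
    apply tendsto_atTop_add_const_right
    exact hγdiv.comp (tendsto_add_atTop_nat 1)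
  have hstep1 : Tendsto a atTop (nhds 0) := by
    rcases hαdiff with hA | ⟨hB1, hB2⟩
    · refine xuLemma a q (fun _ => 0) (fun k => σ k + r k) (2 * M) ha0 haB hq0 hq1
        (fun k => add_nonneg (hσ0 k)
          (mul_nonneg (abs_nonneg _) (add_nonneg (norm_nonneg _) hM₂0)))
        (fun k => ?_) hqdiv' tendsto_const_nhds (hσsum.add (hA.mul_right _))
      have := hkey k
      simp only [mul_zero, add_zero]
      linarith
    · have hqlt : ∀ k, q k < 1 := fun k => lt_of_le_of_ne (hq1 k) (hB1 (k + 1))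
      refine xuLemma a q (fun k => r k / (1 - q k)) σ (2 * M) ha0 haB hq0 hq1 hσ0
        (fun k => ?_) hqdiv' ?_ hσsum
      · have h1 : (1 - q k) * (r k / (1 - q k)) = r k := by
          field_simp [ne_of_gt (sub_pos.2 (hqlt k))]
        rw [h1]
        linarith [hkey k]
      · have : (fun k => r k / (1 - q k))
            = fun k => (|α (k + 1) - α k| / (1 - |γ (k + 1)|)) * (‖u‖ + M₂) := by
          funext k
          simp only [hrdef, hqdef]
          ring
        rw [this]
        simpa using hB2.mul_const (‖u‖ + M₂)
  have hxdiff : Tendsto (fun k => x (k + 1) - x k) atTop (nhds (0 : H)) := by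
    rw [tendsto_zero_iff_norm_tendsto_zero]
    exact hstep1
  -- Step 2
  have hβ0 : Tendsto β atTop (nhds 0) := by
    have h1 := hβsum.tendsto_atTop_zero
    rw [tendsto_zero_iff_norm_tendsto_zero]
    simpa [Real.norm_eq_abs] using h1
  have hγlim : Tendsto γ atTop (nhds 1) := by
    have := hαγ1.sub hα0
    simpa using this
  have hde0 : Tendsto (fun k => δ k • e k) atTop (nhds (0 : H)) := by
    rw [tendsto_zero_iff_norm_tendsto_zero]
    exact hdesum.tendsto_atTop_zero
  have hsx : Tendsto (fun k => (β k + γ k - 1) • x k) atTop (nhds (0 : H)) := by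
    apply squeeze_zero_norm (a := fun k => |β k + γ k - 1| * M)
    · intro k
      rw [norm_smul, Real.norm_eq_abs]
      exact mul_le_mul_of_nonneg_left (hM k) (abs_nonneg _)
    · have h1 : Tendsto (fun k => β k + γ k - 1) atTop (nhds 0) := by
        have := (hβ0.add hγlim).sub_const 1
        simpa using this
      simpa using h1.abs.mul_const M
  have hd0 : Tendsto (fun k => γ k • (x k - J (c k) (x k))) atTop (nhds (0 : H)) := by
    have hid : ∀ k, γ k • (x k - J (c k) (x k))
        = α k • u + δ k • e k + (β k + γ k - 1) • x k - (x (k + 1) - x k) := by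
      intro k
      rw [hrec k]
      module
    simp only [hid]
    have := (((hα0.smul_const u).add hde0).add hsx).sub hxdiff
    simpa using this
  have hγhalf : ∀ᶠ k in atTop, (1 : ℝ) / 2 ≤ γ k :=
    hγlim.eventually (eventually_ge_nhds (by norm_num))
  have hinv : Tendsto (fun k => (γ k)⁻¹) atTop (nhds 1) := by
    have := hγlim.inv₀ one_ne_zero
    simpa using this
  have goal1 : Tendsto (fun k => x k - J (c k) (x k)) atTop (nhds (0 : H)) := by
    have h1 : Tendsto (fun k => (γ k)⁻¹ • (γ k • (x k - J (c k) (x k)))) atTop (nhds (0 : H)) := by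
      have := hinv.smul hd0
      simpa using this
    refine Tendsto.congr' ?_ h1
    filter_upwards [hγhalf] with k hk
    have hγne : γ k ≠ 0 := by linarith
    rw [inv_smul_smul₀ hγne]
  refine ⟨goal1, exists_wcp x M hM, ?_⟩
  -- Step 3
  intro z hz
  obtain ⟨φ, hφ, hwc⟩ := hz
  apply hmax
  intro y v hv
  set w : ℕ → H := fun k => (1 / c (φ k)) • (x (φ k) - J (c (φ k)) (x (φ k))) with hwdef
  have hmem : ∀ k, w k ∈ A (J (c (φ k)) (x (φ k))) := fun k => hJ _ (hc _) _
  have h0 : ∀ k, 0 ≤ ⟪J (c (φ k)) (x (φ k)) - y, w k - v⟫_ℝ := fun k =>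
    hmono _ _ _ _ (hmem k) hv
  have hvφ : Tendsto (fun k => x (φ k) - J (c (φ k)) (x (φ k))) atTop (nhds (0 : H)) :=
    goal1.comp (hφ.tendsto_atTop)
  have hvφn : Tendsto (fun k => ‖x (φ k) - J (c (φ k)) (x (φ k))‖) atTop (nhds 0) := by
    rw [← tendsto_zero_iff_norm_tendsto_zero]
    exact hvφ
  have hwn : Tendsto (fun k => ‖w k‖) atTop (nhds 0) := by
    apply squeeze_zero (fun k => norm_nonneg _)
      (g := fun k => (1 / ε) * ‖x (φ k) - J (c (φ k)) (x (φ k))‖)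
    · intro k
      rw [hwdef]
      simp only [norm_smul, Real.norm_eq_abs]
      have h1 : |1 / c (φ k)| ≤ 1 / ε := by
        rw [abs_of_pos (one_div_pos.2 (hc _))]
        exact one_div_le_one_div_of_le hε (hεc (φ k))
      exact mul_le_mul h1 le_rfl (norm_nonneg _) (by positivity)
    · simpa using hvφn.const_mul (1 / ε)
  have hterm1 : Tendsto (fun k => ⟪J (c (φ k)) (x (φ k)) - y, w k⟫_ℝ) atTop (nhds 0) := by
    apply squeeze_zero_norm (a := fun k => (M₂ + ‖y‖) * ‖w k‖)
    · intro k
      rw [Real.norm_eq_abs]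
      refine le_trans (abs_real_inner_le_norm _ _) ?_
      apply mul_le_mul _ le_rfl (norm_nonneg _) (by positivity)
      exact le_trans (norm_sub_le _ _) (add_le_add (hM₂ _ (hc _) _) le_rfl)
    · simpa using hwn.const_mul (M₂ + ‖y‖)
  have hterm2 : Tendsto (fun k => ⟪x (φ k), v⟫_ℝ) atTop (nhds ⟪z, v⟫_ℝ) := hwc v
  have hterm3 : Tendsto (fun k => ⟪x (φ k) - J (c (φ k)) (x (φ k)), v⟫_ℝ) atTop (nhds 0) := by
    apply squeeze_zero_norm (a := fun k => ‖x (φ k) - J (c (φ k)) (x (φ k))‖ * ‖v‖)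
    · intro k
      rw [Real.norm_eq_abs]
      exact abs_real_inner_le_norm _ _
    · simpa using hvφn.mul_const ‖v‖
  have hcomb : Tendsto (fun k => ⟪J (c (φ k)) (x (φ k)) - y, w k - v⟫_ℝ) atTop
      (nhds (0 - (⟪z, v⟫_ℝ - 0 - ⟪y, v⟫_ℝ))) := by
    have hEq : ∀ k, ⟪J (c (φ k)) (x (φ k)) - y, w k - v⟫_ℝ
        = ⟪J (c (φ k)) (x (φ k)) - y, w k⟫_ℝ
          - (⟪x (φ k), v⟫_ℝ - ⟪x (φ k) - J (c (φ k)) (x (φ k)), v⟫_ℝ - ⟪y, v⟫_ℝ) := by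
      intro k
      simp only [inner_sub_right, inner_sub_left]
      ring
    simp only [hEq]
    exact hterm1.sub ((hterm2.sub hterm3).sub tendsto_const_nhds)
  have hlim : (0 : ℝ) ≤ 0 - (⟪z, v⟫_ℝ - 0 - ⟪y, v⟫_ℝ) := ge_of_tendsto hcomb
    (Filter.Eventually.of_forall h0)
  have : ⟪z - y, (0 : H) - v⟫_ℝ = 0 - (⟪z, v⟫_ℝ - 0 - ⟪y, v⟫_ℝ) := by
    simp only [zero_sub, inner_neg_right, inner_sub_left]
    ring
  rw [this]
  exact hlim
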